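/- arXiv:1603.06658 — 8 statements merged into one kernel-verified Lean document; each statement's English description precedes it below -/
import Mathlib

section
/- For every n ≥ 1 there exist linear functionals u_1,…,u_{2n−1} : ℂ^{2n−1} → ℂ, linear functionals ψ_1,…,ψ_{2n−1} : ℂⁿ → ℂ, and vectors w_1,…,w_{2n−1} ∈ ℂⁿ such that for every a ∈ ℂ^{2n−1} and every v ∈ ℂⁿ, the Toeplitz matrix A represented by a satisfies A·v = Σ_{j=1}^{2n−1} u_j(a)·ψ_j(v)·w_j. That is, the n×n Toeplitz matrix-vector product admits a bilinear algorithm of length 2n−1. -/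
open Finset

/-- The `n × n` Toeplitz matrix represented by `a ∈ ℂ^(2n-1)`:
in 1-based indexing `A i j = a (j - i + n)`. -/
def toeplitzMat (n : ℕ) (a : Fin (2 * n - 1) → ℂ) : Matrix (Fin n) (Fin n) ℂ :=
  Matrix.of fun i j =>
    a ⟨j.val + (n - 1) - i.val, by have hi := i.isLt; have hj := j.isLt; omega⟩

/-- Auxiliary: a linear functional given by coefficients. -/
noncomputable def lfunAux {ι : Type*} [Fintype ι] (c : ι → ℂ) : (ι → ℂ) →ₗ[ℂ] ℂ :=
  ∑ m, c m • LinearMap.proj m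

lemma lfunAux_apply {ι : Type*} [Fintype ι] (c x : ι → ℂ) :
    lfunAux c x = ∑ m, c m * x m := by
  simp [lfunAux]

set_option maxHeartbeats 1000000 in
/-- the `n × n` Toeplitz matrix-vector product admits a bilinear
algorithm of length `2n - 1`. -/
theorem toeplitz_bilinear_algorithm_length (n : ℕ) (hn : 1 ≤ n) :
    ∃ u : Fin (2 * n - 1) → (Fin (2 * n - 1) → ℂ) →ₗ[ℂ] ℂ,
    ∃ ψ : Fin (2 * n - 1) → (Fin n → ℂ) →ₗ[ℂ] ℂ,
    ∃ w : Fin (2 * n - 1) → Fin n → ℂ,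
      ∀ (a : Fin (2 * n - 1) → ℂ) (v : Fin n → ℂ),
        (toeplitzMat n a).mulVec v = ∑ j : Fin (2 * n - 1), (u j a * ψ j v) • w j := by
  have hN0 : 2 * n - 1 ≠ 0 := by omega
  set ω : ℂ := Complex.exp (2 * Real.pi * Complex.I / ((2 * n - 1 : ℕ) : ℂ)) with hω
  have hprim : IsPrimitiveRoot ω (2 * n - 1) := Complex.isPrimitiveRoot_exp _ hN0
  have hNc : ((2 * n - 1 : ℕ) : ℂ) ≠ 0 := Nat.cast_ne_zero.mpr hN0
  have key : ∀ t : ℕ, ∑ k : Fin (2 * n - 1), ω ^ (k.val * t)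
      = if (2 * n - 1) ∣ t then ((2 * n - 1 : ℕ) : ℂ) else 0 := by
    intro t
    have h1 : ∀ k : Fin (2 * n - 1), ω ^ (k.val * t) = (ω ^ t) ^ k.val := by
      intro k; rw [← pow_mul, Nat.mul_comm]
    simp_rw [h1]
    rw [Fin.sum_univ_eq_sum_range (fun k => (ω ^ t) ^ k) (2 * n - 1)]
    by_cases h : (2 * n - 1) ∣ t
    · rw [(hprim.pow_eq_one_iff_dvd t).mpr h]
      simp [h]
    · have hne : ω ^ t ≠ 1 := fun hh => h ((hprim.pow_eq_one_iff_dvd t).mp hh)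
      rw [geom_sum_eq hne]
      have h2 : (ω ^ t) ^ (2 * n - 1) = 1 := by
        rw [← pow_mul, mul_comm, pow_mul, hprim.pow_eq_one, one_pow]
      simp [h2, h]
  refine ⟨fun k => lfunAux (fun m => ω ^ (k.val * m.val)),
          fun k => lfunAux (fun j => ω ^ (k.val * (n - 1 - j.val))),
          fun k i => ((2 * n - 1 : ℕ) : ℂ)⁻¹ * ω ^ (k.val * (i.val + 1)),
          ?_⟩
  intro a v
  funext i
  simp only [Matrix.mulVec, dotProduct, Finset.sum_apply, Pi.smul_apply, smul_eq_mul,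
    lfunAux_apply, toeplitzMat, Matrix.of_apply]
  -- expand products of sums
  have step1 : ∀ k : Fin (2 * n - 1),
      (∑ m : Fin (2 * n - 1), ω ^ (k.val * m.val) * a m) *
        (∑ j : Fin n, ω ^ (k.val * (n - 1 - j.val)) * v j) *
        (((2 * n - 1 : ℕ) : ℂ)⁻¹ * ω ^ (k.val * (i.val + 1)))
      = ∑ m : Fin (2 * n - 1), ∑ j : Fin n,
          a m * v j * ((2 * n - 1 : ℕ) : ℂ)⁻¹ *
            ω ^ (k.val * (m.val + (n - 1 - j.val) + (i.val + 1))) := by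
    intro k
    rw [Finset.sum_mul_sum, Finset.sum_mul]
    refine Finset.sum_congr rfl fun m _ => ?_
    rw [Finset.sum_mul]
    refine Finset.sum_congr rfl fun j _ => ?_
    have : ω ^ (k.val * (m.val + (n - 1 - j.val) + (i.val + 1)))
        = ω ^ (k.val * m.val) * ω ^ (k.val * (n - 1 - j.val)) * ω ^ (k.val * (i.val + 1)) := by
      rw [← pow_add, ← pow_add]; ring_nf
    rw [this]; ring
  rw [Finset.sum_congr rfl fun k _ => step1 k]
  rw [Finset.sum_comm]
  have step2 : ∀ m : Fin (2 * n - 1),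
      (∑ k : Fin (2 * n - 1), ∑ j : Fin n,
          a m * v j * ((2 * n - 1 : ℕ) : ℂ)⁻¹ *
            ω ^ (k.val * (m.val + (n - 1 - j.val) + (i.val + 1))))
      = ∑ j : Fin n, a m * v j * ((2 * n - 1 : ℕ) : ℂ)⁻¹ *
          (if (2 * n - 1) ∣ (m.val + (n - 1 - j.val) + (i.val + 1))
            then ((2 * n - 1 : ℕ) : ℂ) else 0) := by
    intro m
    rw [Finset.sum_comm]
    refine Finset.sum_congr rfl fun j _ => ?_
    rw [← Finset.mul_sum, key]
  rw [Finset.sum_congr rfl fun m _ => step2 m]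
  rw [Finset.sum_comm]
  refine Finset.sum_congr rfl fun j _ => ?_
  -- for fixed j, the only m contributing is m₀ = j + (n-1) - i
  have hj := j.isLt
  have hi := i.isLt
  set m₀ : Fin (2 * n - 1) := ⟨j.val + (n - 1) - i.val, by omega⟩ with hm₀
  have hdvd : ∀ m : Fin (2 * n - 1),
      (2 * n - 1) ∣ (m.val + (n - 1 - j.val) + (i.val + 1)) ↔ m = m₀ := by
    intro m
    have hm := m.isLt
    constructor
    · intro h
      have h1 : m.val + (n - 1 - j.val) + (i.val + 1) ≠ 0 := by omega
      have h2 : m.val + (n - 1 - j.val) + (i.val + 1) < 2 * (2 * n - 1) := by omega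
      have h3 := Nat.eq_of_dvd_of_lt_two_mul h1 h h2
      simp only [Fin.ext_iff, hm₀, Fin.val_mk]
      omega
    · intro hm'
      subst hm'
      refine ⟨1, ?_⟩
      simp only [hm₀, Fin.val_mk]
      omega
  rw [Finset.sum_eq_single m₀ (fun m _ hne => by
    rw [if_neg (fun h => hne ((hdvd m).mp h)), mul_zero])
    (fun h => absurd (Finset.mem_univ m₀) h)]
  rw [if_pos ((hdvd m₀).mpr rfl), mul_assoc, inv_mul_cancel₀ hNc, mul_one]
end

section
/- For every n ≥ 1, every bilinear algorithm for the n×n Toeplitz matrix-vector product has length at least 2n−1: if u_1,…,u_r : ℂ^{2n−1} → ℂ and ψ_1,…,ψ_r : ℂⁿ → ℂ are linear functionals and w_1,…,w_r ∈ ℂⁿ are vectors such that for every a ∈ ℂ^{2n−1} and v ∈ ℂⁿ the Toeplitz matrix A represented by a satisfies A·v = Σ_{j=1}^{r} u_j(a)·ψ_j(v)·w_j, then r ≥ 2n−1. Hence the bilinear complexity of the Toeplitz matrix-vector product is exactly 2n−1. -/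
/-- every bilinear algorithm for the `n × n` Toeplitz matrix-vector
product has length at least `2n - 1`; hence the bilinear complexity is exactly `2n - 1`. -/
theorem toeplitz_bilinear_algorithm_lower_bound (n : ℕ) (hn : 1 ≤ n) (r : ℕ)
    (u : Fin r → (Fin (2 * n - 1) → ℂ) →ₗ[ℂ] ℂ)
    (ψ : Fin r → (Fin n → ℂ) →ₗ[ℂ] ℂ)
    (w : Fin r → Fin n → ℂ)
    (h : ∀ (a : Fin (2 * n - 1) → ℂ) (v : Fin n → ℂ),
      (toeplitzMat n a).mulVec v = ∑ j : Fin r, (u j a * ψ j v) • w j) :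
    2 * n - 1 ≤ r := by
  classical
  -- the linear map sending parameters to the Toeplitz matrix
  let T : (Fin (2 * n - 1) → ℂ) →ₗ[ℂ] Matrix (Fin n) (Fin n) ℂ :=
    { toFun := toeplitzMat n
      map_add' := fun a b => by ext i j; simp [toeplitzMat]
      map_smul' := fun c a => by ext i j; simp [toeplitzMat] }
  -- rank-one matrices
  let M : Fin r → Matrix (Fin n) (Fin n) ℂ :=
    fun j => Matrix.of fun i k => ψ j (Pi.single k 1) * w j i
  let U : (Fin r → ℂ) →ₗ[ℂ] Matrix (Fin n) (Fin n) ℂ :=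
    { toFun := fun c => ∑ j, c j • M j
      map_add' := fun c d => by
        simp [add_smul, Finset.sum_add_distrib]
      map_smul' := fun s c => by
        simp [smul_smul, Finset.smul_sum] }
  have key : ∀ a (i k : Fin n), toeplitzMat n a i k
      = ∑ j, u j a * (ψ j (Pi.single k 1) * w j i) := by
    intro a i k
    have h1 := congrFun (h a (Pi.single k 1)) i
    have h2 : (toeplitzMat n a).mulVec (Pi.single k 1) i = toeplitzMat n a i k := by
      simp [Matrix.mulVec, dotProduct, Pi.single_apply, mul_ite]
    rw [h2] at h1
    rw [h1]
    simp [Finset.sum_apply, mul_assoc]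
  have hsub : LinearMap.range T ≤ LinearMap.range U := by
    rintro _ ⟨a, rfl⟩
    refine ⟨fun j => u j a, ?_⟩
    show (∑ j, u j a • M j) = toeplitzMat n a
    ext i k
    rw [key a i k]
    simp [M, Matrix.sum_apply]
  have hinj : Function.Injective T := by
    rw [← LinearMap.ker_eq_bot, LinearMap.ker_eq_bot']
    intro a ha
    have ha' : toeplitzMat n a = 0 := ha
    funext m
    by_cases hm : n - 1 ≤ m.val
    · have := congrFun (congrFun ha' ⟨0, hn⟩) ⟨m.val - (n - 1), by omega⟩
      simp only [toeplitzMat, Matrix.of_apply, Matrix.zero_apply] at this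
      convert this using 2
      ext
      simp
      omega
      rfl
    · have := congrFun (congrFun ha' ⟨n - 1 - m.val, by omega⟩) ⟨0, by omega⟩
      simp only [toeplitzMat, Matrix.of_apply, Matrix.zero_apply] at this
      convert this using 2
      ext
      simp
      omega
      rfl
  have hT : Module.finrank ℂ (LinearMap.range T) = 2 * n - 1 := by
    rw [LinearMap.finrank_range_of_inj hinj]
    simp
  have hU : Module.finrank ℂ (LinearMap.range U) ≤ r := by
    have := LinearMap.finrank_range_le U
    simpa using this
  calc 2 * n - 1 = Module.finrank ℂ (LinearMap.range T) := hT.symm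
    _ ≤ Module.finrank ℂ (LinearMap.range U) := Submodule.finrank_mono hsub
    _ ≤ r := hU
end

section
/- For every n ≥ 1 there exist linear functionals u_1,…,u_{2n−1} : ℂ^{2n−1} → ℂ, linear functionals ψ_1,…,ψ_{2n−1} : ℂⁿ → ℂ, and vectors w_1,…,w_{2n−1} ∈ ℂⁿ such that for every h ∈ ℂ^{2n−1} and every v ∈ ℂⁿ, the Hankel matrix H represented by h satisfies H·v = Σ_{j=1}^{2n−1} u_j(h)·ψ_j(v)·w_j. That is, the n×n Hankel matrix-vector product admits a bilinear algorithm of length 2n−1. -/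
/-- The `n × n` Hankel matrix represented by `h ∈ ℂ^(2n-1)`:
in 1-based indexing `H i j = h (2n + 1 - i - j)`, i.e. in 0-based indexing
`H i j = h (2n - 2 - i - j)`. -/
def hankelMat (n : ℕ) (h : Fin (2 * n - 1) → ℂ) : Matrix (Fin n) (Fin n) ℂ :=
  Matrix.of fun i j =>
    h ⟨2 * n - 2 - i.val - j.val, by have hi := i.isLt; have hj := j.isLt; omega⟩

/-- the `n × n` Hankel matrix-vector product admits a bilinear
algorithm of length `2n - 1`. -/
theorem hankel_bilinear_algorithm_length (n : ℕ) (hn : 1 ≤ n) :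
    ∃ u : Fin (2 * n - 1) → (Fin (2 * n - 1) → ℂ) →ₗ[ℂ] ℂ,
    ∃ ψ : Fin (2 * n - 1) → (Fin n → ℂ) →ₗ[ℂ] ℂ,
    ∃ w : Fin (2 * n - 1) → Fin n → ℂ,
      ∀ (h : Fin (2 * n - 1) → ℂ) (v : Fin n → ℂ),
        (hankelMat n h).mulVec v = ∑ j : Fin (2 * n - 1), (u j h * ψ j v) • w j := by
  classical
  set x : Fin (2 * n - 1) → ℂ := fun j => (j.val : ℂ) with hx
  have hxinj : Function.Injective x := by
    intro a b hab
    exact Fin.ext (Nat.cast_injective hab)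
  set V : Matrix (Fin (2 * n - 1)) (Fin (2 * n - 1)) ℂ := Matrix.vandermonde x with hVdef
  have hdet : IsUnit V.det := by
    rw [hVdef, Matrix.det_vandermonde, isUnit_iff_ne_zero]
    apply Finset.prod_ne_zero_iff.mpr
    intro i _
    apply Finset.prod_ne_zero_iff.mpr
    intro j hj
    rw [sub_ne_zero]
    intro hEq
    have : j = i := hxinj hEq
    simp [this] at hj
  have hinv : V⁻¹ * V = 1 := Matrix.nonsing_inv_mul V hdet
  have key : ∀ (k m : Fin (2 * n - 1)),
      (∑ j, V⁻¹ k j * x j ^ m.val) = if k = m then 1 else 0 := by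
    intro k m
    have h1 := congrFun (congrFun hinv k) m
    simpa [Matrix.mul_apply, Matrix.one_apply, hVdef, Matrix.vandermonde] using h1
  refine ⟨fun j => ∑ k, V⁻¹ k j • (LinearMap.proj k : (Fin (2 * n - 1) → ℂ) →ₗ[ℂ] ℂ),
      fun j => ∑ q : Fin n, (x j ^ (n - 1 - q.val)) • (LinearMap.proj q : (Fin n → ℂ) →ₗ[ℂ] ℂ),
      fun j i => x j ^ (n - 1 - i.val), ?_⟩
  intro h v
  funext i
  simp only [Matrix.mulVec, dotProduct, hankelMat, Matrix.of_apply,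
    Finset.sum_apply, Pi.smul_apply, smul_eq_mul, LinearMap.sum_apply,
    LinearMap.smul_apply, LinearMap.proj_apply]
  have hm : ∀ q : Fin n, (n - 1 - q.val) + (n - 1 - i.val) < 2 * n - 1 := by
    intro q; have := q.isLt; have := i.isLt; omega
  have expand : ∀ j : Fin (2 * n - 1),
      (∑ k, V⁻¹ k j * h k) * (∑ q : Fin n, x j ^ (n - 1 - q.val) * v q)
          * x j ^ (n - 1 - i.val)
        = ∑ k, ∑ q : Fin n,
            (h k * v q) * (V⁻¹ k j * x j ^ ((n - 1 - q.val) + (n - 1 - i.val))) := by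
    intro j
    rw [Finset.sum_mul_sum, Finset.sum_mul]
    refine Finset.sum_congr rfl fun k _ => ?_
    rw [Finset.sum_mul]
    refine Finset.sum_congr rfl fun q _ => ?_
    rw [pow_add]; ring
  calc
    (∑ q : Fin n, h ⟨2 * n - 2 - i.val - q.val,
        by have := i.isLt; have := q.isLt; omega⟩ * v q)
        = ∑ q : Fin n, ∑ k : Fin (2 * n - 1), (h k * v q) *
            (if k = (⟨(n - 1 - q.val) + (n - 1 - i.val), hm q⟩ : Fin (2 * n - 1))
              then 1 else 0) := by
          refine Finset.sum_congr rfl fun q _ => ?_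
          rw [Finset.sum_eq_single
            (⟨(n - 1 - q.val) + (n - 1 - i.val), hm q⟩ : Fin (2 * n - 1))]
          · rw [if_pos rfl, mul_one]
            have hfin : (⟨2 * n - 2 - i.val - q.val,
                by have := i.isLt; have := q.isLt; omega⟩ : Fin (2 * n - 1))
                = ⟨(n - 1 - q.val) + (n - 1 - i.val), hm q⟩ := by
              apply Fin.ext
              simp only
              have := i.isLt; have := q.isLt; omega
            rw [hfin]
          · intro k _ hk; simp [hk]
          · intro hk; simp at hk
    _ = ∑ q : Fin n, ∑ k : Fin (2 * n - 1), (h k * v q) *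
          (∑ j, V⁻¹ k j * x j ^ ((n - 1 - q.val) + (n - 1 - i.val))) := by
          refine Finset.sum_congr rfl fun q _ => ?_
          refine Finset.sum_congr rfl fun k _ => ?_
          rw [key k ⟨(n - 1 - q.val) + (n - 1 - i.val), hm q⟩]
    _ = ∑ q : Fin n, ∑ k : Fin (2 * n - 1), ∑ j : Fin (2 * n - 1),
          (h k * v q) * (V⁻¹ k j * x j ^ ((n - 1 - q.val) + (n - 1 - i.val))) := by
          refine Finset.sum_congr rfl fun q _ => ?_
          refine Finset.sum_congr rfl fun k _ => ?_
          rw [Finset.mul_sum]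
    _ = ∑ j : Fin (2 * n - 1), ∑ k : Fin (2 * n - 1), ∑ q : Fin n,
          (h k * v q) * (V⁻¹ k j * x j ^ ((n - 1 - q.val) + (n - 1 - i.val))) := by
          have comm3 : ∀ f : Fin n → Fin (2 * n - 1) → Fin (2 * n - 1) → ℂ,
              (∑ q : Fin n, ∑ k, ∑ j, f q k j) = ∑ j, ∑ k, ∑ q : Fin n, f q k j := by
            intro f
            calc (∑ q : Fin n, ∑ k, ∑ j, f q k j)
                = ∑ q : Fin n, ∑ j, ∑ k, f q k j :=
                  Finset.sum_congr rfl fun q _ => Finset.sum_comm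
              _ = ∑ j, ∑ q : Fin n, ∑ k, f q k j := Finset.sum_comm
              _ = ∑ j, ∑ k, ∑ q : Fin n, f q k j :=
                  Finset.sum_congr rfl fun j _ => Finset.sum_comm
          exact comm3 _
    _ = ∑ j, (∑ k, V⁻¹ k j * h k) * (∑ q : Fin n, x j ^ (n - 1 - q.val) * v q)
          * x j ^ (n - 1 - i.val) := by
          refine Finset.sum_congr rfl fun j _ => (expand j).symm
end

section
/- For every n ≥ 1, every bilinear algorithm for the n×n Hankel matrix-vector product has length at least 2n−1: if u_1,…,u_r : ℂ^{2n−1} → ℂ and ψ_1,…,ψ_r : ℂⁿ → ℂ are linear functionals and w_1,…,w_r ∈ ℂⁿ are vectors such that for every h ∈ ℂ^{2n−1} and v ∈ ℂⁿ the Hankel matrix H represented by h satisfies H·v = Σ_{j=1}^{r} u_j(h)·ψ_j(v)·w_j, then r ≥ 2n−1. Hence the bilinear complexity of the Hankel matrix-vector product is exactly 2n−1. -/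
/-- every bilinear algorithm for the `n × n` Hankel matrix-vector
product has length at least `2n - 1`; hence the bilinear complexity is exactly `2n - 1`. -/
theorem hankel_bilinear_algorithm_lower_bound (n : ℕ) (hn : 1 ≤ n) (r : ℕ)
    (u : Fin r → (Fin (2 * n - 1) → ℂ) →ₗ[ℂ] ℂ)
    (ψ : Fin r → (Fin n → ℂ) →ₗ[ℂ] ℂ)
    (w : Fin r → Fin n → ℂ)
    (h : ∀ (h' : Fin (2 * n - 1) → ℂ) (v : Fin n → ℂ),
      (hankelMat n h').mulVec v = ∑ j : Fin r, (u j h' * ψ j v) • w j) :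
    2 * n - 1 ≤ r := by
  classical
  set M := Matrix (Fin n) (Fin n) ℂ
  let Φ : (Fin (2 * n - 1) → ℂ) →ₗ[ℂ] M :=
    { toFun := hankelMat n
      map_add' := by intro a b; rfl
      map_smul' := by intro c a; rfl }
  have hinj : Function.Injective Φ := by
    rw [injective_iff_map_eq_zero]
    intro a ha
    funext t
    have ht := t.isLt
    set i : Fin n := ⟨min (n - 1) (2 * n - 2 - t.val), by omega⟩
    set j : Fin n := ⟨2 * n - 2 - t.val - i.val, by simp only [i]; omega⟩
    have := congrFun (congrFun ha i) j
    change hankelMat n a i j = (0 : Matrix (Fin n) (Fin n) ℂ) i j at this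
    show a t = (0 : ℂ)
    simp only [Φ, LinearMap.coe_mk, AddHom.coe_mk, hankelMat, Matrix.of_apply,
      Matrix.zero_apply] at this
    convert this using 2
    ext
    simp only [i, j]
    omega
  -- the rank-one matrices
  let A : Fin r → M := fun j => Matrix.of fun i k => w j i * ψ j (Pi.single k 1)
  have hspan : LinearMap.range Φ ≤ Submodule.span ℂ (Set.range A) := by
    rintro _ ⟨h', rfl⟩
    have key : Φ h' = ∑ j, u j h' • A j := by
      ext i k
      have hk := congrFun (h h' (Pi.single k 1)) i
      rw [Matrix.mulVec_single] at hk
      simp only [Pi.smul_apply, MulOpposite.op_one, one_smul, Matrix.col_apply] at hk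
      simp only [Φ, LinearMap.coe_mk, AddHom.coe_mk] at hk ⊢
      change hankelMat n h' i k = _
      rw [hk]
      rw [Finset.sum_apply, Matrix.sum_apply]
      simp only [Pi.smul_apply, Matrix.smul_apply, smul_eq_mul, A, Matrix.of_apply]
      refine Finset.sum_congr rfl fun j _ => ?_
      show _ = u j h' • (w j i * ψ j (Pi.single k 1))
      rw [smul_eq_mul]; ring
    rw [key]
    exact Submodule.sum_mem _ fun j _ =>
      Submodule.smul_mem _ _ (Submodule.subset_span ⟨j, rfl⟩)
  have h1 : Module.finrank ℂ (LinearMap.range Φ) = 2 * n - 1 := by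
    rw [LinearMap.finrank_range_of_inj hinj]
    simp
  have h2 : Module.finrank ℂ (LinearMap.range Φ) ≤
      Module.finrank ℂ (Submodule.span ℂ (Set.range A)) :=
    Submodule.finrank_mono hspan
  have h3 : Module.finrank ℂ (Submodule.span ℂ (Set.range A)) ≤ r := by
    simpa [Set.finrank] using finrank_range_le_card A
  omega
end

section
/- Let n ≥ 1 and let m = ⌈n/2⌉. Every symmetric n×n complex matrix S can be written as S = Σ_{k=1}^{m} S_k, where for each k the matrix S_k satisfies: (S_k)_{ij} = 0 unless k ≤ i ≤ n+1−k and k ≤ j ≤ n+1−k, and on the central block the entries of S_k depend only on i+j, i.e. (S_k)_{ij} = (S_k)_{i'j'} whenever i+j = i'+j' and all four indices lie in [k, n+1−k]. In other words, every symmetric matrix is a sum of ⌈n/2⌉ centrally-embedded Hankel matrices of successively smaller sizes n, n−2, n−4, …. -/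
/-- every symmetric `n × n` complex matrix is a sum of `m = ⌈n/2⌉`
centrally-embedded Hankel matrices of successively smaller sizes.  Indexing the
summands by `k : Fin ⌈n/2⌉` (0-based, corresponding to the 1-based `k+1`), the
`k`-th summand vanishes outside the central block `[k, n-1-k] × [k, n-1-k]`
(0-based), and on that block its entries depend only on `i + j`. -/
theorem symmetric_is_sum_of_central_hankels (n : ℕ) (hn : 1 ≤ n)
    (S : Matrix (Fin n) (Fin n) ℂ) (hS : S.IsSymm) :
    ∃ T : Fin ((n + 1) / 2) → Matrix (Fin n) (Fin n) ℂ,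
      S = ∑ k, T k ∧
      (∀ (k : Fin ((n + 1) / 2)) (i j : Fin n),
        ¬ (k.val ≤ i.val ∧ i.val + k.val + 1 ≤ n ∧ k.val ≤ j.val ∧ j.val + k.val + 1 ≤ n) →
        T k i j = 0) ∧
      (∀ (k : Fin ((n + 1) / 2)) (i j i' j' : Fin n),
        k.val ≤ i.val → i.val + k.val + 1 ≤ n →
        k.val ≤ j.val → j.val + k.val + 1 ≤ n →
        k.val ≤ i'.val → i'.val + k.val + 1 ≤ n →
        k.val ≤ j'.val → j'.val + k.val + 1 ≤ n →
        i.val + j.val = i'.val + j'.val → T k i j = T k i' j') := by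
  have hn1 : n - 1 < n := Nat.sub_lt hn one_pos
  -- representative indices for level k, antidiagonal s
  set m := (n + 1) / 2 with hm
  let a : ℕ → ℕ → Fin n := fun k s =>
    ⟨min (k + s - min s (n - 1)) (n - 1), lt_of_le_of_lt (min_le_right _ _) hn1⟩
  let b : ℕ → ℕ → Fin n := fun k s =>
    ⟨min s (n - 1) - k, lt_of_le_of_lt (le_trans (Nat.sub_le _ _) (min_le_right _ _)) hn1⟩
  let G : ℕ → ℕ → ℂ := fun k s => S (a k s) (b k s)
  let H : ℕ → ℕ → ℂ := fun k s => G k s - if k = 0 then 0 else G (k - 1) s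
  let T : Fin m → Matrix (Fin n) (Fin n) ℂ := fun k => Matrix.of fun i j =>
    if k.val ≤ i.val ∧ i.val + k.val + 1 ≤ n ∧ k.val ≤ j.val ∧ j.val + k.val + 1 ≤ n then
      H k.val (i.val + j.val) else 0
  have htel : ∀ s L, ∑ k ∈ Finset.range (L + 1), H k s = G L s := by
    intro s L
    induction L with
    | zero => simp [H]
    | succ L ih =>
        rw [Finset.sum_range_succ, ih]
        simp only [H, Nat.succ_ne_zero, if_false, Nat.add_sub_cancel]
        ring
  refine ⟨T, ?_, ?_, ?_⟩
  · ext i j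
    have hi := i.isLt
    have hj := j.isLt
    set L := min (min i.val j.val) (min (n - 1 - i.val) (n - 1 - j.val)) with hL
    have hLm : L + 1 ≤ m := by omega
    set f : ℕ → ℂ := fun k =>
      if k ≤ i.val ∧ i.val + k + 1 ≤ n ∧ k ≤ j.val ∧ j.val + k + 1 ≤ n then
        H k (i.val + j.val) else 0 with hf
    have hsum : (∑ k, T k) i j = ∑ k ∈ Finset.range m, f k := by
      rw [Matrix.sum_apply]
      exact Fin.sum_univ_eq_sum_range f m
    rw [hsum, ← Finset.sum_subset (Finset.range_subset_range.2 hLm)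
      (by
        intro k hk hk'
        simp only [Finset.mem_range] at hk hk'
        simp only [hf]
        rw [if_neg (by omega)])]
    have h2 : ∑ k ∈ Finset.range (L + 1), f k = ∑ k ∈ Finset.range (L + 1), H k (i.val + j.val) := by
      refine Finset.sum_congr rfl fun k hk => ?_
      simp only [Finset.mem_range] at hk
      simp only [hf]
      rw [if_pos (by omega)]
    rw [h2, htel]
    have ha : (a L (i.val + j.val)).val = min i.val j.val := by
      simp only [a]; omega
    have hb : (b L (i.val + j.val)).val = max i.val j.val := by
      simp only [b]; omega
    simp only [G]
    rcases le_total i.val j.val with h | h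
    · have hai : a L (i.val + j.val) = i := Fin.ext (by omega)
      have hbj : b L (i.val + j.val) = j := Fin.ext (by omega)
      rw [hai, hbj]
    · have hai : a L (i.val + j.val) = j := Fin.ext (by omega)
      have hbj : b L (i.val + j.val) = i := Fin.ext (by omega)
      rw [hai, hbj]
      exact (hS.apply i j).symm
  · intro k i j hk
    exact if_neg hk
  · intro k i j i' j' h1 h2 h3 h4 h5 h6 h7 h8 hsum
    have e1 : T k i j = H k.val (i.val + j.val) := if_pos ⟨h1, h2, h3, h4⟩
    have e2 : T k i' j' = H k.val (i'.val + j'.val) := if_pos ⟨h5, h6, h7, h8⟩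
    rw [e1, e2, hsum]
end

section
/- For every n ≥ 1, let N = n(n+1)/2. There exist linear functionals u_1,…,u_N : ℂ^N → ℂ, linear functionals ψ_1,…,ψ_N : ℂⁿ → ℂ, and vectors w_1,…,w_N ∈ ℂⁿ such that for every s ∈ ℂ^N and every v ∈ ℂⁿ, the symmetric matrix S represented by s satisfies S·v = Σ_{j=1}^{N} u_j(s)·ψ_j(v)·w_j. That is, the n×n symmetric matrix-vector product admits a bilinear algorithm of length n(n+1)/2. -/
def symOfUpper (n : ℕ) (s : {p : Fin n × Fin n // p.1 ≤ p.2} → ℂ) :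
    Matrix (Fin n) (Fin n) ℂ :=
  Matrix.of fun i j =>
    if h : i ≤ j then s ⟨(i, j), h⟩ else s ⟨(j, i), le_of_not_ge h⟩

noncomputable def evSym (n : ℕ) (a b : Fin n) :
    ({p : Fin n × Fin n // p.1 ≤ p.2} → ℂ) →ₗ[ℂ] ℂ :=
  if h : a ≤ b then LinearMap.proj ⟨(a, b), h⟩ else LinearMap.proj ⟨(b, a), le_of_not_ge h⟩

lemma evSym_apply (n : ℕ) (a b : Fin n) (s : {p : Fin n × Fin n // p.1 ≤ p.2} → ℂ) :
    evSym n a b s = symOfUpper n s a b := by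
  unfold evSym symOfUpper
  split <;> simp [Matrix.of_apply, *]

lemma symOfUpper_symm (n : ℕ) (s : {p : Fin n × Fin n // p.1 ≤ p.2} → ℂ) (a b : Fin n) :
    symOfUpper n s a b = symOfUpper n s b a := by
  unfold symOfUpper
  rcases le_or_gt a b with h | h
  · rcases eq_or_lt_of_le h with rfl | h'
    · rfl
    · simp [h, not_le.2 h', le_of_lt h']
  · simp [le_of_lt h, not_le.2 h]

lemma card_eq_sym (n : ℕ) :
    Fintype.card {p : Fin n × Fin n // p.1 ≤ p.2} = n * (n + 1) / 2 := by
  rw [← Fintype.card_congr (Sym2.sortEquiv (α := Fin n)), Sym2.card]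
  simp [Nat.choose_two_right, Nat.mul_comm]

/-- the `n × n` symmetric matrix-vector product admits a bilinear
algorithm of length `N = n(n+1)/2`. -/
theorem symmetric_bilinear_algorithm_length (n : ℕ) (hn : 1 ≤ n) :
    ∃ u : Fin (n * (n + 1) / 2) → ({p : Fin n × Fin n // p.1 ≤ p.2} → ℂ) →ₗ[ℂ] ℂ,
    ∃ ψ : Fin (n * (n + 1) / 2) → (Fin n → ℂ) →ₗ[ℂ] ℂ,
    ∃ w : Fin (n * (n + 1) / 2) → Fin n → ℂ,
      ∀ (s : {p : Fin n × Fin n // p.1 ≤ p.2} → ℂ) (v : Fin n → ℂ),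
        (symOfUpper n s).mulVec v = ∑ j : Fin (n * (n + 1) / 2), (u j s * ψ j v) • w j := by
  classical
  obtain ⟨e⟩ : Nonempty (Fin (n * (n + 1) / 2) ≃ {p : Fin n × Fin n // p.1 ≤ p.2}) :=
    ⟨(Fintype.equivFinOfCardEq (card_eq_sym n)).symm⟩
  set U : Fin n × Fin n → ({p : Fin n × Fin n // p.1 ≤ p.2} → ℂ) →ₗ[ℂ] ℂ :=
    fun q => if q.1 = q.2 then evSym n q.1 q.1 - ∑ j ∈ Finset.univ.erase q.1, evSym n q.1 j
      else evSym n q.1 q.2 with hU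
  set Ψ : Fin n × Fin n → (Fin n → ℂ) →ₗ[ℂ] ℂ :=
    fun q => if q.1 = q.2 then (LinearMap.proj q.1 : (Fin n → ℂ) →ₗ[ℂ] ℂ)
      else (LinearMap.proj q.1 : (Fin n → ℂ) →ₗ[ℂ] ℂ) + LinearMap.proj q.2
    with hΨ
  set W : Fin n × Fin n → Fin n → ℂ :=
    fun q => if q.1 = q.2 then Pi.single q.1 1 else Pi.single q.1 1 + Pi.single q.2 1 with hW
  refine ⟨fun j => U (e j).1, fun j => Ψ (e j).1, fun j => W (e j).1, fun s v => ?_⟩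
  funext i
  rw [Finset.sum_apply]
  refine Eq.trans ?_ (Equiv.sum_comp e (fun p : {p : Fin n × Fin n // p.1 ≤ p.2} =>
    ((U p.1 s * Ψ p.1 v) • W p.1) i)).symm
  set S := symOfUpper n s with hS
  have hsum : ∑ p : {p : Fin n × Fin n // p.1 ≤ p.2}, ((U p.1 s * Ψ p.1 v) • W p.1) i
      = ∑ q : Fin n × Fin n, if q.1 ≤ q.2 then ((U q s * Ψ q v) • W q) i else 0 := by
    rw [← Finset.sum_filter]
    exact (Finset.sum_subtype (p := fun q : Fin n × Fin n => q.1 ≤ q.2)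
      (Finset.univ.filter fun q : Fin n × Fin n => q.1 ≤ q.2) (fun x => by simp)
      (fun q => ((U q s * Ψ q v) • W q) i)).symm
  rw [hsum]
  have hterm : ∀ q : Fin n × Fin n,
      (if q.1 ≤ q.2 then ((U q s * Ψ q v) • W q) i else 0)
      = (if q.1 = q.2 then ((S q.1 q.1 - ∑ j ∈ Finset.univ.erase q.1, S q.1 j) * v q.1)
            * (if i = q.1 then (1:ℂ) else 0) else 0)
        + (if q.1 < q.2 then (S q.1 q.2 * (v q.1 + v q.2))
            * ((if i = q.1 then (1:ℂ) else 0) + (if i = q.2 then (1:ℂ) else 0)) else 0) := by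
    intro ⟨a, b⟩
    rcases lt_trichotomy a b with h | h | h
    · simp only [hU, hΨ, hW, le_of_lt h, if_true, h, ne_of_lt h, if_false, if_neg (ne_of_lt h)]
      simp only [LinearMap.add_apply, LinearMap.proj_apply, Pi.smul_apply, Pi.add_apply,
        smul_eq_mul, Pi.single_apply, evSym_apply, zero_add, ← hS] <;> ring
    · subst h
      simp only [hU, hΨ, hW, le_refl, if_true, lt_irrefl, if_false]
      simp [evSym_apply, Pi.single_apply, ← hS]
    · simp [not_le.2 h, not_lt.2 (le_of_lt h), ne_of_gt h, (ne_of_lt h).symm]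
  simp only [hterm]
  rw [Finset.sum_add_distrib]
  have hdiag : (∑ q : Fin n × Fin n, if q.1 = q.2 then
      ((S q.1 q.1 - ∑ j ∈ Finset.univ.erase q.1, S q.1 j) * v q.1)
        * (if i = q.1 then (1:ℂ) else 0) else 0)
      = (S i i - ∑ j ∈ Finset.univ.erase i, S i j) * v i := by
    rw [Fintype.sum_prod_type]
    have h1 : ∀ a : Fin n, (∑ b : Fin n, if a = b then
        ((S a a - ∑ j ∈ Finset.univ.erase a, S a j) * v a)
          * (if i = a then (1:ℂ) else 0) else 0)
        = ((S a a - ∑ j ∈ Finset.univ.erase a, S a j) * v a)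
            * (if i = a then (1:ℂ) else 0) := by
      intro a; simp
    simp only [h1, mul_ite, mul_one, mul_zero]
    simp
  rw [hdiag]
  have hoff : (∑ q : Fin n × Fin n, if q.1 < q.2 then (S q.1 q.2 * (v q.1 + v q.2))
        * ((if i = q.1 then (1:ℂ) else 0) + (if i = q.2 then (1:ℂ) else 0)) else 0)
      = ∑ j ∈ Finset.univ.erase i, S i j * (v i + v j) := by
    have split : ∀ q : Fin n × Fin n, (if q.1 < q.2 then (S q.1 q.2 * (v q.1 + v q.2))
        * ((if i = q.1 then (1:ℂ) else 0) + (if i = q.2 then (1:ℂ) else 0)) else 0)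
      = (if q.1 = i then (if i < q.2 then S i q.2 * (v i + v q.2) else 0) else 0)
        + (if q.2 = i then (if q.1 < i then S q.1 i * (v q.1 + v i) else 0) else 0) := by
      intro ⟨a, b⟩
      dsimp only
      rcases eq_or_ne a i with rfl | ha
      · by_cases hb : a < b
        · simp [hb, ne_of_lt hb, (ne_of_lt hb).symm, lt_irrefl]
        · simp [hb, lt_irrefl]
      · rcases eq_or_ne b i with rfl | hb
        · simp [ha, Ne.symm ha]
        · simp [ha, hb, Ne.symm ha, Ne.symm hb]
    simp only [split]
    rw [Finset.sum_add_distrib, Fintype.sum_prod_type, Fintype.sum_prod_type]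
    have c1 : (∑ a : Fin n, ∑ b : Fin n, if a = i then
        (if i < b then S i b * (v i + v b) else 0) else 0)
        = ∑ b : Fin n, if i < b then S i b * (v i + v b) else 0 := by
      rw [Finset.sum_comm]; simp
    have c2 : (∑ a : Fin n, ∑ b : Fin n, if b = i then
        (if a < i then S a i * (v a + v i) else 0) else 0)
        = ∑ a : Fin n, if a < i then S a i * (v a + v i) else 0 := by
      simp
    rw [c1, c2]
    have comb : ∀ j : Fin n, (if i < j then S i j * (v i + v j) else 0)
        + (if j < i then S j i * (v j + v i) else 0)
        = if j ∈ Finset.univ.erase i then S i j * (v i + v j) else 0 := by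
      intro j
      rcases lt_trichotomy i j with h | h | h
      · rw [if_pos h, if_neg (lt_asymm h),
          if_pos (Finset.mem_erase.2 ⟨(ne_of_lt h).symm, Finset.mem_univ j⟩), add_zero]
      · subst h; simp
      · rw [if_neg (lt_asymm h), if_pos h,
          if_pos (Finset.mem_erase.2 ⟨ne_of_lt h, Finset.mem_univ j⟩), zero_add]
        have hsymm : S j i = S i j := symOfUpper_symm n s j i
        rw [hsymm]; ring
    rw [← Finset.sum_add_distrib]
    simp only [comb]
    rw [Finset.sum_ite_mem]
    simp
  rw [hoff]
  have expand : ∑ j ∈ Finset.univ.erase i, S i j * (v i + v j)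
      = (∑ j ∈ Finset.univ.erase i, S i j * v i) + ∑ j ∈ Finset.univ.erase i, S i j * v j := by
    rw [← Finset.sum_add_distrib]; apply Finset.sum_congr rfl; intros; ring
  have final : (S i i - ∑ j ∈ Finset.univ.erase i, S i j) * v i
      + ∑ j ∈ Finset.univ.erase i, S i j * (v i + v j) = ∑ j : Fin n, S i j * v j := by
    rw [expand, ← Finset.add_sum_erase Finset.univ (fun j => S i j * v j) (Finset.mem_univ i),
      sub_mul, Finset.sum_mul]
    ring
  rw [final]
  simp [Matrix.mulVec, dotProduct, ← hS]
end

section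
/- Let n ≥ 1 and let S ⊆ {1,…,n} × {1,…,n} be a set of matrix positions, and let X_S be the linear space of n×n complex matrices A with A_{ij} = 0 for all (i,j) ∉ S. Every bilinear algorithm for the matrix-vector product on X_S has length at least #S: if u_1,…,u_r : X_S → ℂ and ψ_1,…,ψ_r : ℂⁿ → ℂ are linear functionals and w_1,…,w_r ∈ ℂⁿ are vectors with A·v = Σ_{j=1}^{r} u_j(A)·ψ_j(v)·w_j for all A ∈ X_S and v ∈ ℂⁿ, then r ≥ #S. Hence the bilinear complexity of the sparse matrix-vector product is exactly #S. -/
/-- for any sparsity support `S`, every bilinear algorithm for the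
matrix-vector product on `n × n` matrices supported on `S` has length at least
`#S`; hence the bilinear complexity of the sparse matrix-vector product is
exactly `#S`. -/
theorem sparse_bilinear_algorithm_lower_bound (n : ℕ) (hn : 1 ≤ n)
    (S : Finset (Fin n × Fin n)) (r : ℕ)
    (u : Fin r → Matrix (Fin n) (Fin n) ℂ →ₗ[ℂ] ℂ)
    (ψ : Fin r → (Fin n → ℂ) →ₗ[ℂ] ℂ)
    (w : Fin r → Fin n → ℂ)
    (h : ∀ A : Matrix (Fin n) (Fin n) ℂ,
      (∀ p : Fin n × Fin n, p ∉ S → A p.1 p.2 = 0) →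
      ∀ v : Fin n → ℂ,
        A.mulVec v = ∑ j : Fin r, (u j A * ψ j v) • w j) :
    S.card ≤ r := by
  classical
  have key : LinearIndependent ℂ
      (fun p : S => (fun j : Fin r => u j (Matrix.single p.1.1 p.1.2 1))) := by
    rw [Fintype.linearIndependent_iff]
    intro g hg p
    set A : Matrix (Fin n) (Fin n) ℂ :=
      ∑ q : S, g q • Matrix.single q.1.1 q.1.2 1 with hA
    have hAentry : ∀ i k, A i k = ∑ q : S, g q *
        (if q.1.1 = i ∧ q.1.2 = k then (1:ℂ) else 0) := by
      intro i k
      simp [hA, Matrix.sum_apply, Matrix.single]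
    have hsupp : ∀ q : Fin n × Fin n, q ∉ S → A q.1 q.2 = 0 := by
      intro q hq
      rw [hAentry]
      apply Finset.sum_eq_zero
      intro x _
      have : ¬(x.1.1 = q.1 ∧ x.1.2 = q.2) := by
        rintro ⟨h1, h2⟩
        exact hq (Prod.ext h1 h2 ▸ x.2)
      simp [this]
    have hu : ∀ j, u j A = 0 := by
      intro j
      have := congrFun hg j
      rw [hA, map_sum]
      simp only [map_smul, smul_eq_mul]
      simpa using this
    have hzero : A = 0 := by
      ext i k
      have hv := h A hsupp (Pi.single k 1)
      have : A.mulVec (Pi.single k 1) = 0 := by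
        rw [hv]
        apply Finset.sum_eq_zero
        intro j _
        simp [hu j]
      have hcol := congrFun this i
      simpa [Matrix.mulVec, dotProduct, Pi.single_apply,
        mul_comm] using hcol
    have hgp : A p.1.1 p.1.2 = g p := by
      rw [hAentry]
      rw [Finset.sum_eq_single p]
      · simp
      · intro q _ hq
        have : ¬(q.1.1 = p.1.1 ∧ q.1.2 = p.1.2) := by
          rintro ⟨h1, h2⟩
          exact hq (Subtype.ext (Prod.ext h1 h2))
        simp [this]
      · intro hp; exact absurd (Finset.mem_univ p) hp
    rw [hzero] at hgp
    simpa using hgp.symm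
  have hcard := key.fintype_card_le_finrank
  simpa [Module.finrank_fin_fun] using hcard
end

section
/- Let n, m ≥ 1. (Upper bound) There exist linear functionals u_1,…,u_{nm} : ℂⁿ × ℂ^m → ℂ of the product form u_l(a,b) = φ_l(a)·χ_l(b) with φ_l, χ_l linear, linear functionals ψ_1,…,ψ_{nm} : ℂ^{nm} → ℂ, and vectors w_1,…,w_{nm} ∈ ℂ^{nm} such that for every a ∈ ℂⁿ, b ∈ ℂ^m, and v ∈ ℂ^{nm}, (A ⊗ B)·v = Σ_{l=1}^{nm} φ_l(a)·χ_l(b)·ψ_l(v)·w_l, where A is the n×n circulant matrix with first row a and B is the m×m circulant matrix with first row b. (Lower bound) Moreover, every bilinear algorithm computing (A ⊗ B)·v from linear functionals of the pair (a,b) and of v has length at least nm. Hence the bilinear complexity of the two-level circulant (BCCB) matrix-vector product is exactly nm. -/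
open Kronecker

/-- The `n × n` circulant matrix with first row `a`: `A i j = a ((j - i) mod n)`. -/
def circulantMat (n : ℕ) (a : Fin n → ℂ) : Matrix (Fin n) (Fin n) ℂ :=
  Matrix.of fun i j => a (j - i)

noncomputable def dotL {ι : Type*} [Fintype ι] (c : ι → ℂ) : (ι → ℂ) →ₗ[ℂ] ℂ where
  toFun v := ∑ i, c i * v i
  map_add' x y := by simp [mul_add, Finset.sum_add_distrib]
  map_smul' r x := by simp [Finset.mul_sum, mul_left_comm]

noncomputable def zC (n : ℕ) : ℂ := Complex.exp (2 * Real.pi * Complex.I / n)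

noncomputable def E (n : ℕ) (k x : Fin n) : ℂ := zC n ^ (k.val * x.val)

lemma zC_pow_mul_mod {n : ℕ} (hn : n ≠ 0) (k s : ℕ) :
    zC n ^ (k * (s % n)) = zC n ^ (k * s) := by
  have h1 : zC n ^ n = 1 := (Complex.isPrimitiveRoot_exp n hn).pow_eq_one
  rw [pow_eq_pow_mod _ h1, pow_eq_pow_mod (k * s) h1]
  congr 1
  conv_lhs => rw [Nat.mul_mod, Nat.mod_mod_of_dvd _ dvd_rfl, ← Nat.mul_mod]

lemma E_add {n : ℕ} (hn : n ≠ 0) (k x y : Fin n) :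
    E n k (x + y) = E n k x * E n k y := by
  have hv : (x + y).val = (x.val + y.val) % n := by
    haveI : NeZero n := ⟨hn⟩
    exact Fin.val_add x y
  rw [E, E, E, hv, zC_pow_mul_mod hn, Nat.mul_add, pow_add]

lemma E_sum {n : ℕ} [NeZero n] (x : Fin n) :
    ∑ k : Fin n, E n k x = if x = 0 then (n : ℂ) else 0 := by
  have hn : n ≠ 0 := NeZero.ne n
  have hp := Complex.isPrimitiveRoot_exp n hn
  have h1 : zC n ^ n = 1 := hp.pow_eq_one
  by_cases hx : x = 0
  · subst hx
    simp [E]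
  · have hd : ¬ (n ∣ x.val) := by
      intro h
      exact hx (Fin.ext (Nat.eq_zero_of_dvd_of_lt h x.isLt))
    have hz : zC n ^ x.val ≠ 1 := fun h => hd (((Complex.isPrimitiveRoot_exp n hn).pow_eq_one_iff_dvd x.val).1 (by exact h))
    have hE : ∀ k : Fin n, E n k x = (zC n ^ x.val) ^ k.val := by
      intro k; rw [E, mul_comm, pow_mul]
    simp only [hE]
    rw [Fin.sum_univ_eq_sum_range (fun i => (zC n ^ x.val) ^ i) n, geom_sum_eq hz,
      ← pow_mul, mul_comm x.val n, pow_mul, h1, one_pow]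
    simp [hx]

lemma oneD {n : ℕ} (hn : n ≠ 0) (a u : Fin n → ℂ) (i : Fin n) :
    ∑ k : Fin n, (∑ p, E n k p * a p) * ((∑ s, E n k (-s) * u s) * E n k i)
      = n * ∑ s, a (s - i) * u s := by
  haveI : NeZero n := ⟨hn⟩
  calc ∑ k : Fin n, (∑ p, E n k p * a p) * ((∑ s, E n k (-s) * u s) * E n k i)
      = ∑ k : Fin n, ∑ s, ∑ p, a p * u s * E n k (p + -s + i) := by
        refine Finset.sum_congr rfl fun k _ => ?_
        simp only [Finset.sum_mul, Finset.mul_sum]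
        refine Finset.sum_congr rfl fun s _ => Finset.sum_congr rfl fun p _ => ?_
        rw [E_add hn k (p + -s) i, E_add hn k p (-s)]
        ring
    _ = ∑ s, ∑ p, a p * u s * ∑ k : Fin n, E n k (p + -s + i) := by
        rw [Finset.sum_comm]
        refine Finset.sum_congr rfl fun s _ => ?_
        rw [Finset.sum_comm]
        refine Finset.sum_congr rfl fun p _ => ?_
        rw [← Finset.mul_sum]
    _ = ∑ s, ∑ p, a p * u s * (if p + -s + i = 0 then (n : ℂ) else 0) := by
        simp only [E_sum]
    _ = n * ∑ s, a (s - i) * u s := by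
        rw [Finset.mul_sum]
        refine Finset.sum_congr rfl fun s _ => ?_
        have hc : ∀ p : Fin n, (p + -s + i = 0) ↔ (p = s - i) := by
          intro p
          constructor <;> intro h <;> open Fin.CommRing in linear_combination h
        simp only [hc, mul_ite, mul_zero, Finset.sum_ite_eq', Finset.mem_univ, if_true]
        ring

lemma twoD {n m : ℕ} (hn : n ≠ 0) (hm : m ≠ 0) (a : Fin n → ℂ) (b : Fin m → ℂ)
    (v : Fin n × Fin m → ℂ) (i : Fin n) (j : Fin m) :
    ∑ k : Fin n × Fin m,
      ((∑ p, E n k.1 p * a p) * (∑ q, E m k.2 q * b q) *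
        (∑ st : Fin n × Fin m, E n k.1 (-st.1) * E m k.2 (-st.2) * v st))
        * (((n : ℂ) * (m : ℂ))⁻¹ * (E n k.1 i * E m k.2 j))
    = ∑ st : Fin n × Fin m, a (st.1 - i) * b (st.2 - j) * v st := by
  haveI : NeZero n := ⟨hn⟩
  haveI : NeZero m := ⟨hm⟩
  have hnC : (n : ℂ) ≠ 0 := Nat.cast_ne_zero.2 hn
  have hmC : (m : ℂ) ≠ 0 := Nat.cast_ne_zero.2 hm
  calc ∑ k : Fin n × Fin m,
      ((∑ p, E n k.1 p * a p) * (∑ q, E m k.2 q * b q) *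
        (∑ st : Fin n × Fin m, E n k.1 (-st.1) * E m k.2 (-st.2) * v st))
        * (((n : ℂ) * (m : ℂ))⁻¹ * (E n k.1 i * E m k.2 j))
      = ∑ k1 : Fin n, ∑ k2 : Fin m,
          ((∑ p, E n k1 p * a p) * (∑ q, E m k2 q * b q) *
            (∑ st : Fin n × Fin m, E n k1 (-st.1) * E m k2 (-st.2) * v st))
            * (((n : ℂ) * (m : ℂ))⁻¹ * (E n k1 i * E m k2 j)) := by
        rw [Fintype.sum_prod_type]
    _ = ∑ k1 : Fin n, (((n : ℂ) * (m : ℂ))⁻¹ * ((∑ p, E n k1 p * a p) * E n k1 i)) *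
          ∑ k2 : Fin m, (∑ q, E m k2 q * b q) *
            ((∑ t, E m k2 (-t) * (∑ s, E n k1 (-s) * v (s, t))) * E m k2 j) := by
        refine Finset.sum_congr rfl fun k1 _ => ?_
        rw [Finset.mul_sum]
        refine Finset.sum_congr rfl fun k2 _ => ?_
        have hΨ : (∑ st : Fin n × Fin m, E n k1 (-st.1) * E m k2 (-st.2) * v st)
            = ∑ t, E m k2 (-t) * (∑ s, E n k1 (-s) * v (s, t)) := by
          rw [Fintype.sum_prod_type, Finset.sum_comm]
          refine Finset.sum_congr rfl fun t _ => ?_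
          rw [Finset.mul_sum]
          exact Finset.sum_congr rfl fun s _ => by ring
        rw [hΨ]
        ring
    _ = ∑ k1 : Fin n, (((n : ℂ) * (m : ℂ))⁻¹ * ((∑ p, E n k1 p * a p) * E n k1 i)) *
          ((m : ℂ) * ∑ t, b (t - j) * (∑ s, E n k1 (-s) * v (s, t))) := by
        refine Finset.sum_congr rfl fun k1 _ => ?_
        rw [oneD hm b (fun t => ∑ s, E n k1 (-s) * v (s, t)) j]
    _ = ∑ k1 : Fin n, (((n : ℂ) * (m : ℂ))⁻¹ * (m : ℂ)) *
          ((∑ p, E n k1 p * a p) *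
            ((∑ s, E n k1 (-s) * (∑ t, b (t - j) * v (s, t))) * E n k1 i)) := by
        refine Finset.sum_congr rfl fun k1 _ => ?_
        have hswap : ∑ t, b (t - j) * (∑ s, E n k1 (-s) * v (s, t))
            = ∑ s, E n k1 (-s) * ∑ t, b (t - j) * v (s, t) := by
          simp only [Finset.mul_sum]
          rw [Finset.sum_comm]
          exact Finset.sum_congr rfl fun s _ =>
            Finset.sum_congr rfl fun t _ => by ring
        rw [hswap]
        ring
    _ = (((n : ℂ) * (m : ℂ))⁻¹ * (m : ℂ)) *
          ((n : ℂ) * ∑ s, a (s - i) * ∑ t, b (t - j) * v (s, t)) := by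
        rw [← Finset.mul_sum, oneD hn a (fun s => ∑ t, b (t - j) * v (s, t)) i]
    _ = ∑ st : Fin n × Fin m, a (st.1 - i) * b (st.2 - j) * v st := by
        rw [Fintype.sum_prod_type]
        have hc : ∀ S : ℂ, (((n : ℂ) * (m : ℂ))⁻¹ * (m : ℂ)) * ((n : ℂ) * S) = S := by
          intro S; field_simp
        rw [hc]
        refine Finset.sum_congr rfl fun s _ => ?_
        rw [Finset.mul_sum]
        exact Finset.sum_congr rfl fun t _ => by ring

/-- the two-level circulant (BCCB) matrix-vector product has bilinear
complexity exactly `n·m`.  Upper bound: there is a bilinear algorithm of length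
`n·m` whose matrix functionals have the product form `u_l(a,b) = φ_l(a)·χ_l(b)`.
Lower bound: every bilinear algorithm whose matrix functionals are linear in the
BCCB matrix (equivalently, in its parameters) has length at least `n·m`. -/
theorem bccb_bilinear_complexity (n m : ℕ) (hn : 1 ≤ n) (hm : 1 ≤ m) :
    (∃ φ : Fin (n * m) → (Fin n → ℂ) →ₗ[ℂ] ℂ,
     ∃ χ : Fin (n * m) → (Fin m → ℂ) →ₗ[ℂ] ℂ,
     ∃ ψ : Fin (n * m) → (Fin n × Fin m → ℂ) →ₗ[ℂ] ℂ,
     ∃ w : Fin (n * m) → Fin n × Fin m → ℂ,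
      ∀ (a : Fin n → ℂ) (b : Fin m → ℂ) (v : Fin n × Fin m → ℂ),
        ((circulantMat n a) ⊗ₖ (circulantMat m b)).mulVec v
          = ∑ l : Fin (n * m), (φ l a * χ l b * ψ l v) • w l) ∧
    (∀ (r : ℕ)
       (u : Fin r → Matrix (Fin n × Fin m) (Fin n × Fin m) ℂ →ₗ[ℂ] ℂ)
       (ψ : Fin r → (Fin n × Fin m → ℂ) →ₗ[ℂ] ℂ)
       (w : Fin r → Fin n × Fin m → ℂ),
      (∀ (a : Fin n → ℂ) (b : Fin m → ℂ) (v : Fin n × Fin m → ℂ),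
        ((circulantMat n a) ⊗ₖ (circulantMat m b)).mulVec v
          = ∑ j : Fin r, (u j ((circulantMat n a) ⊗ₖ (circulantMat m b)) * ψ j v) • w j) →
      n * m ≤ r) := by
  have hn0 : n ≠ 0 := by omega
  have hm0 : m ≠ 0 := by omega
  haveI : NeZero n := ⟨hn0⟩
  haveI : NeZero m := ⟨hm0⟩
  constructor
  · -- upper bound
    let e : Fin (n * m) ≃ Fin n × Fin m := finProdFinEquiv.symm
    refine ⟨fun l => dotL (fun p => E n (e l).1 p),
            fun l => dotL (fun q => E m (e l).2 q),
            fun l => dotL (fun st => E n (e l).1 (-st.1) * E m (e l).2 (-st.2)),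
            fun l => fun ij => ((n : ℂ) * (m : ℂ))⁻¹ * (E n (e l).1 ij.1 * E m (e l).2 ij.2),
            ?_⟩
    intro a b v
    funext ij
    have hL : (((circulantMat n a) ⊗ₖ (circulantMat m b)).mulVec v) ij
        = ∑ st : Fin n × Fin m, a (st.1 - ij.1) * b (st.2 - ij.2) * v st := by
      simp [Matrix.mulVec, dotProduct, Matrix.kroneckerMap_apply, circulantMat, mul_assoc]
    rw [hL]
    simp only [Finset.sum_apply, Pi.smul_apply, smul_eq_mul]
    rw [show (∑ l : Fin (n * m),
          (dotL (fun p => E n (e l).1 p) a * dotL (fun q => E m (e l).2 q) b *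
            dotL (fun st : Fin n × Fin m => E n (e l).1 (-st.1) * E m (e l).2 (-st.2)) v) *
            (((n : ℂ) * (m : ℂ))⁻¹ * (E n (e l).1 ij.1 * E m (e l).2 ij.2)))
        = ∑ k : Fin n × Fin m,
          ((∑ p, E n k.1 p * a p) * (∑ q, E m k.2 q * b q) *
            (∑ st : Fin n × Fin m, E n k.1 (-st.1) * E m k.2 (-st.2) * v st))
            * (((n : ℂ) * (m : ℂ))⁻¹ * (E n k.1 ij.1 * E m k.2 ij.2))
        from Fintype.sum_equiv e _ _ (fun l => rfl)]
    exact (twoD hn0 hm0 a b v ij.1 ij.2).symm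
  · -- lower bound
    intro r u ψ w hAlg
    have hId : circulantMat n (Pi.single 0 1) = (1 : Matrix (Fin n) (Fin n) ℂ) := by
      ext i j
      simp [circulantMat, Matrix.one_apply, Pi.single_apply, sub_eq_zero, eq_comm]
    have hId' : circulantMat m (Pi.single 0 1) = (1 : Matrix (Fin m) (Fin m) ℂ) := by
      ext i j
      simp [circulantMat, Matrix.one_apply, Pi.single_apply, sub_eq_zero, eq_comm]
    have key : ∀ v : Fin n × Fin m → ℂ,
        v = ∑ j : Fin r, (u j (1 : Matrix (Fin n × Fin m) (Fin n × Fin m) ℂ) * ψ j v) • w j := by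
      intro v
      have h := hAlg (Pi.single 0 1) (Pi.single 0 1) v
      rw [hId, hId', Matrix.one_kronecker_one, Matrix.one_mulVec] at h
      exact h
    have hspan : Submodule.span ℂ (Set.range w) = ⊤ := by
      refine le_antisymm le_top ?_
      intro v _
      rw [key v]
      exact Submodule.sum_mem _ fun j _ =>
        Submodule.smul_mem _ _ (Submodule.subset_span ⟨j, rfl⟩)
    calc n * m = Fintype.card (Fin n × Fin m) := by simp
      _ = Module.finrank ℂ (Fin n × Fin m → ℂ) :=
          (Module.finrank_fintype_fun_eq_card ℂ).symm
      _ ≤ Fintype.card (Fin r) := finrank_le_of_span_eq_top hspan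
      _ = r := by simp
end
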